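/- Let λ : [0,1] → ℝ be continuous with λ(z) > 0 for all z ∈ [0,1], and define φ(z) = ∫_z^1 dη/λ(η). Suppose u : [0,1] × [0,∞) → ℝ is continuously differentiable and satisfies the transport equation ∂_t u(z,t) = λ(z)·∂_z u(z,t) for all (z,t) ∈ [0,1] × (0,∞) together with the boundary condition u(1,t) = 0 for all t ≥ 0. Then u(z,t) = 0 for all z ∈ [0,1] and all t ≥ φ(z); in particular u(·,t) vanishes identically for all t ≥ φ(0), i.e., the transport equation is finite-time stable with settling time ∫₀¹ dη/λ(η). -/

import Mathlib

open Set

/-- finite-time stability of the scalar transport equation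
`∂_t u = λ(z) ∂_z u` with boundary condition `u(1,t) = 0`: the solution vanishes at `(z,t)`
as soon as `t ≥ φ(z) = ∫_z^1 dη/λ(η)`; in particular `u(·,t) ≡ 0` for `t ≥ φ(0) = ∫₀¹ dη/λ(η)`,
i.e. the settling time is `∫₀¹ dη/λ(η)`. -/
theorem transport_equation_finite_time_stable
    (lam : ℝ → ℝ)
    (hlam_cont : ContinuousOn lam (Icc 0 1))
    (hlam_pos : ∀ z ∈ Icc (0 : ℝ) 1, 0 < lam z)
    (φ : ℝ → ℝ)
    (hφ : ∀ z, φ z = ∫ η in z..1, (lam η)⁻¹)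
    (u : ℝ → ℝ → ℝ)
    (hu_C1 : ContDiffOn ℝ 1 (fun p : ℝ × ℝ => u p.1 p.2) (Icc 0 1 ×ˢ Ici 0))
    (hpde : ∀ z ∈ Icc (0 : ℝ) 1, ∀ t ∈ Ioi (0 : ℝ),
      derivWithin (fun s => u z s) (Ici 0) t
        = lam z * derivWithin (fun y => u y t) (Icc 0 1) z)
    (hbc : ∀ t : ℝ, 0 ≤ t → u 1 t = 0) :
    (∀ z ∈ Icc (0 : ℝ) 1, ∀ t : ℝ, φ z ≤ t → u z t = 0) ∧
    (∀ t : ℝ, φ 0 ≤ t → ∀ z ∈ Icc (0 : ℝ) 1, u z t = 0) := by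
  classical
  -- continuous positive extension of `lam` to all of `ℝ`
  set lamE : ℝ → ℝ := fun η => lam (max 0 (min 1 η)) with hlamE
  have hmem : ∀ η : ℝ, max 0 (min 1 η) ∈ Icc (0 : ℝ) 1 := by
    intro η
    exact ⟨le_max_left _ _, max_le zero_le_one (min_le_left _ _)⟩
  have hE_cont : Continuous lamE :=
    hlam_cont.comp_continuous (continuous_const.max (continuous_const.min continuous_id)) hmem
  have hE_pos : ∀ η, 0 < lamE η := fun η => hlam_pos _ (hmem η)
  have hI_cont : Continuous fun η => (lamE η)⁻¹ :=
    hE_cont.inv₀ fun η => (hE_pos η).ne'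
  set ψ : ℝ → ℝ := fun y => ∫ η in y..1, (lamE η)⁻¹ with hψdef
  have hInt : ∀ a b : ℝ, IntervalIntegrable (fun η => (lamE η)⁻¹) MeasureTheory.volume a b :=
    fun a b => hI_cont.intervalIntegrable a b
  have hEeq : ∀ η ∈ Icc (0 : ℝ) 1, lamE η = lam η := by
    intro η hη
    simp [hlamE, min_eq_right hη.2, max_eq_right hη.1]
  have hφψ : ∀ y ∈ Icc (0 : ℝ) 1, φ y = ψ y := by
    intro y hy
    rw [hφ y]
    apply intervalIntegral.integral_congr
    intro η hη
    rw [uIcc_of_le hy.2] at hη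
    simp only []
    rw [hEeq η ⟨hy.1.trans hη.1, hη.2⟩]
  have hψ_deriv : ∀ x : ℝ, HasDerivAt ψ (-(lamE x)⁻¹) x := by
    intro x
    exact intervalIntegral.integral_hasDerivAt_left (hInt x 1)
      (hI_cont.stronglyMeasurable.stronglyMeasurableAtFilter) hI_cont.continuousAt
  have hψ_cont : Continuous ψ :=
    continuous_iff_continuousAt.2 fun x => (hψ_deriv x).continuousAt
  have hψ_nonneg : ∀ y, y ≤ 1 → 0 ≤ ψ y := fun y hy =>
    intervalIntegral.integral_nonneg hy fun η _ => (inv_pos.2 (hE_pos η)).le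
  have hψ_pos : ∀ y, y < 1 → 0 < ψ y := fun y hy =>
    intervalIntegral.intervalIntegral_pos_of_pos_on (hInt y 1)
      (fun η _ => inv_pos.2 (hE_pos η)) hy
  have hψ1 : ψ 1 = 0 := intervalIntegral.integral_same
  have hS : UniqueDiffOn ℝ (Icc (0:ℝ) 1 ×ˢ Ici (0:ℝ)) :=
    (uniqueDiffOn_Icc one_pos).prod (uniqueDiffOn_Ici 0)
  have key : ∀ z ∈ Icc (0 : ℝ) 1, ∀ t : ℝ, φ z ≤ t → u z t = 0 := by
    intro z hz t ht
    set c := t - φ z with hc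
    have hφz : φ z = ψ z := hφψ z hz
    have hc0 : 0 ≤ c := by simp only [hc, sub_nonneg]; exact ht
    set g : ℝ → ℝ := fun y => u y (c + ψ y) with hg
    have hmaps : MapsTo (fun y => ((y, c + ψ y) : ℝ × ℝ)) (Icc z 1) (Icc 0 1 ×ˢ Ici 0) := by
      intro y hy
      refine ⟨⟨hz.1.trans hy.1, hy.2⟩, ?_⟩
      have := hψ_nonneg y hy.2
      simp only [mem_Ici]
      linarith
    have hgcont : ContinuousOn g (Icc z 1) := by
      apply hu_C1.continuousOn.comp _ hmaps
      exact (continuous_id.prodMk (continuous_const.add hψ_cont)).continuousOn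
    have hderiv : ∀ x ∈ Ico z 1, HasDerivWithinAt g 0 (Ici x) x := by
      intro x hx
      have hx01 : x ∈ Icc (0 : ℝ) 1 := ⟨hz.1.trans hx.1, hx.2.le⟩
      set τ := c + ψ x with hτ
      have hτpos : 0 < τ := by
        have := hψ_pos x hx.2
        simp only [hτ]; linarith
      have hp : ((x, τ) : ℝ × ℝ) ∈ Icc (0:ℝ) 1 ×ˢ Ici (0:ℝ) := ⟨hx01, hτpos.le⟩
      have hdiff : DifferentiableWithinAt ℝ (fun p : ℝ × ℝ => u p.1 p.2)
          (Icc 0 1 ×ˢ Ici 0) (x, τ) := (hu_C1.differentiableOn one_ne_zero) _ hp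
      set F := fderivWithin ℝ (fun p : ℝ × ℝ => u p.1 p.2) (Icc 0 1 ×ˢ Ici 0) (x, τ) with hF
      have hFd : HasFDerivWithinAt (fun p : ℝ × ℝ => u p.1 p.2) F (Icc 0 1 ×ˢ Ici 0) (x, τ) :=
        hdiff.hasFDerivWithinAt
      -- partial derivative in t
      have hslice_t : HasDerivWithinAt (fun s => u x s) (F (0, 1)) (Ici 0) τ := by
        have hin : HasDerivWithinAt (fun s : ℝ => ((x, s) : ℝ × ℝ)) (0, 1) (Ici 0) τ :=
          ((hasDerivAt_const τ x).prodMk (hasDerivAt_id τ)).hasDerivWithinAt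
        have hm : MapsTo (fun s : ℝ => ((x, s) : ℝ × ℝ)) (Ici 0) (Icc 0 1 ×ˢ Ici 0) :=
          fun s hs => ⟨hx01, hs⟩
        exact hFd.comp_hasDerivWithinAt τ hin hm
      -- partial derivative in z
      have hslice_z : HasDerivWithinAt (fun y => u y τ) (F (1, 0)) (Icc 0 1) x := by
        have hin : HasDerivWithinAt (fun y : ℝ => ((y, τ) : ℝ × ℝ)) (1, 0) (Icc 0 1) x :=
          ((hasDerivAt_id x).prodMk (hasDerivAt_const x τ)).hasDerivWithinAt
        have hm : MapsTo (fun y : ℝ => ((y, τ) : ℝ × ℝ)) (Icc 0 1) (Icc 0 1 ×ˢ Ici 0) :=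
          fun y hy => ⟨hy, hτpos.le⟩
        exact hFd.comp_hasDerivWithinAt x hin hm
      have h1 : derivWithin (fun s => u x s) (Ici 0) τ = F (0, 1) :=
        hslice_t.derivWithin (uniqueDiffOn_Ici 0 τ hτpos.le)
      have h2 : derivWithin (fun y => u y τ) (Icc 0 1) x = F (1, 0) :=
        hslice_z.derivWithin (uniqueDiffOn_Icc one_pos x hx01)
      have hrel : F (0, 1) = lam x * F (1, 0) := by
        rw [← h1, ← h2]; exact hpde x hx01 τ hτpos
      -- derivative of the characteristic curve
      have hψx : HasDerivAt (fun y => c + ψ y) (-(lamE x)⁻¹) x := (hψ_deriv x).const_add c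
      have hcurve : HasDerivWithinAt (fun y : ℝ => ((y, c + ψ y) : ℝ × ℝ))
          (1, -(lamE x)⁻¹) (Icc x 1) x :=
        ((hasDerivAt_id x).prodMk hψx).hasDerivWithinAt
      have hmaps2 : MapsTo (fun y : ℝ => ((y, c + ψ y) : ℝ × ℝ)) (Icc x 1) (Icc 0 1 ×ˢ Ici 0) :=
        hmaps.mono_left (Icc_subset_Icc_left hx.1)
      have hcomp : HasDerivWithinAt g (F (1, -(lamE x)⁻¹)) (Icc x 1) x :=
        by have := hFd.comp_hasDerivWithinAt x hcurve hmaps2; exact this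
      have hval : F (1, -(lamE x)⁻¹) = 0 := by
        have hsplit : ((1 : ℝ), -(lamE x)⁻¹) = ((1:ℝ), (0:ℝ)) + (-(lamE x)⁻¹) • ((0:ℝ), (1:ℝ)) := by
          simp
        rw [hsplit, map_add, map_smul, hrel, hEeq x hx01, smul_eq_mul]
        have := (hlam_pos x hx01).ne'
        field_simp
        ring
      rw [hval] at hcomp
      have hIccmem : Icc x 1 ∈ nhdsWithin x (Ici x) := by
        rw [← Ici_inter_Iic]
        exact inter_mem_nhdsWithin _ (Iic_mem_nhds hx.2)
      exact hcomp.mono_of_mem_nhdsWithin hIccmem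
    have hconst := constant_of_has_deriv_right_zero hgcont hderiv 1 (right_mem_Icc.2 hz.2)
    have hg1 : g 1 = 0 := by
      simp only [hg, hψ1, add_zero]
      exact hbc c hc0
    have hgz : g z = u z t := by
      simp only [hg]
      congr 1
      rw [← hφz, hc]; ring
    rw [hg1, hgz] at hconst
    exact hconst.symm
  refine ⟨key, ?_⟩
  intro t ht z hz
  apply key z hz t
  have hφ0 : φ 0 = ψ 0 := hφψ 0 (left_mem_Icc.2 zero_le_one)
  have hφz : φ z = ψ z := hφψ z hz
  have hsplit : ψ 0 = (∫ η in (0:ℝ)..z, (lamE η)⁻¹) + ψ z :=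
    (intervalIntegral.integral_add_adjacent_intervals (hInt 0 z) (hInt z 1)).symm
  have hpos : 0 ≤ ∫ η in (0:ℝ)..z, (lamE η)⁻¹ :=
    intervalIntegral.integral_nonneg hz.1 fun η _ => (inv_pos.2 (hE_pos η)).le
  have : φ z ≤ φ 0 := by rw [hφ0, hφz, hsplit]; linarith
  linarith
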